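/- Let P = {P_k} be a complete family of orthogonal projectors, Δ the block-dephasing map, and define the robustness of block coherence by its dual formulation C_rob(ρ,P) = sup{ Tr(Xρ) − 1 : X positive semidefinite, Δ(X) = I }. Then for every density matrix ρ, the matrix X₁ := I − Δ(ρ) + ρ is positive semidefinite and satisfies Δ(X₁) = I, and consequently C_rob(ρ,P) ≥ −Tr(ρ W_ρ) = Tr(ρ²) − Tr(ρ Δ(ρ)), where W_ρ = Δ(ρ) − ρ. -/

import Mathlib

open Matrix
open scoped ComplexOrder Classical

namespace BlockCoherence

variable {n : Type*} [Fintype n] [DecidableEq n]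

/-- Real part of the trace of a complex matrix. -/
noncomputable def retr (A : Matrix n n ℂ) : ℝ := (Matrix.trace A).re

/-- A density matrix: positive semidefinite with trace 1. -/
def IsDensityMatrix (ρ : Matrix n n ℂ) : Prop := ρ.PosSemidef ∧ Matrix.trace ρ = 1

/-- A complete family of orthogonal projectors. -/
def IsProjFamily {K : Type*} [Fintype K] (P : K → Matrix n n ℂ) : Prop :=
  (∀ k, (P k).IsHermitian) ∧ (∀ k, P k * P k = P k) ∧
    (∀ j k, j ≠ k → P j * P k = 0) ∧ (∑ k, P k = 1)

/-- Block dephasing map Δ(ρ) = Σ_k P_k ρ P_k. -/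
noncomputable def deph {K : Type*} [Fintype K] (P : K → Matrix n n ℂ)
    (ρ : Matrix n n ℂ) : Matrix n n ℂ := ∑ k, P k * ρ * P k

/-- Block incoherent (free) states. -/
def IsBlockIncoherent {K : Type*} [Fintype K] (P : K → Matrix n n ℂ)
    (σ : Matrix n n ℂ) : Prop := IsDensityMatrix σ ∧ σ = deph P σ

/-- A block-incoherent operation presented by its Kraus operators. -/
def IsBIOp {K : Type*} [Fintype K] {N : Type*} [Fintype N]
    (P : K → Matrix n n ℂ) (Kr : N → Matrix n n ℂ) : Prop :=
  (∑ m, (Kr m)ᴴ * Kr m = 1) ∧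
    ∀ (m : N) (i j : K), i ≠ j → ∀ σ, IsBlockIncoherent P σ →
      P i * (Kr m * σ * (Kr m)ᴴ) * P j = 0

/-- The channel determined by Kraus operators. -/
noncomputable def krausApply {N : Type*} [Fintype N]
    (Kr : N → Matrix n n ℂ) (ρ : Matrix n n ℂ) : Matrix n n ℂ :=
  ∑ m, Kr m * ρ * (Kr m)ᴴ

/-- A block coherence measure: conditions (B1)-(B4). -/
structure IsBlockCoherenceMeasure {K : Type*} [Fintype K] (P : K → Matrix n n ℂ)
    (C : Matrix n n ℂ → ℝ) : Prop where
  nonneg : ∀ ρ, IsDensityMatrix ρ → 0 ≤ C ρ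
  eq_zero_iff : ∀ ρ, IsDensityMatrix ρ → (C ρ = 0 ↔ IsBlockIncoherent P ρ)
  monotone : ∀ ρ, IsDensityMatrix ρ → ∀ {N : Type} [Fintype N] (Kr : N → Matrix n n ℂ),
    IsBIOp P Kr → C (krausApply Kr ρ) ≤ C ρ
  strong_monotone : ∀ ρ, IsDensityMatrix ρ → ∀ {N : Type} [Fintype N] (Kr : N → Matrix n n ℂ),
    IsBIOp P Kr →
      ∑ m, (if retr (Kr m * ρ * (Kr m)ᴴ) = 0 then (0 : ℝ) else
        retr (Kr m * ρ * (Kr m)ᴴ) *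
          C ((retr (Kr m * ρ * (Kr m)ᴴ))⁻¹ • (Kr m * ρ * (Kr m)ᴴ))) ≤ C ρ
  convex : ∀ {N : Type} [Fintype N] (p : N → ℝ) (ρs : N → Matrix n n ℂ),
    (∀ m, 0 ≤ p m) → ∑ m, p m = 1 → (∀ m, IsDensityMatrix (ρs m)) →
      C (∑ m, p m • ρs m) ≤ ∑ m, p m * C (ρs m)

/-- Real power of a matrix via the spectral functional calculus (0 on non-Hermitian input). -/
noncomputable def mpow (A : Matrix n n ℂ) (t : ℝ) : Matrix n n ℂ :=
  if hA : A.IsHermitian then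
    (hA.eigenvectorUnitary : Matrix n n ℂ) *
      Matrix.diagonal (fun i => ((hA.eigenvalues i ^ t : ℝ) : ℂ)) *
      (star (hA.eigenvectorUnitary : Matrix n n ℂ))
  else 0

/-- Positive semidefinite square root (0 on non-PSD input). -/
noncomputable def msqrt (A : Matrix n n ℂ) : Matrix n n ℂ :=
  if hA : A.PosSemidef then
    (hA.1.eigenvectorUnitary : Matrix n n ℂ) *
      Matrix.diagonal ((↑) ∘ (Real.sqrt ·) ∘ hA.1.eigenvalues) *
      (star (hA.1.eigenvectorUnitary : Matrix n n ℂ))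
  else 0

/-- Base-2 matrix logarithm via spectral calculus, with the convention log 0 = 0. -/
noncomputable def mlog2 (A : Matrix n n ℂ) : Matrix n n ℂ :=
  if hA : A.IsHermitian then
    (hA.eigenvectorUnitary : Matrix n n ℂ) *
      Matrix.diagonal (fun i => ((Real.logb 2 (hA.eigenvalues i) : ℝ) : ℂ)) *
      (star (hA.eigenvectorUnitary : Matrix n n ℂ))
  else 0

/-- Trace norm ‖M‖_Tr = Tr √(MᴴM). -/
noncomputable def trNorm (M : Matrix n n ℂ) : ℝ :=
  retr (msqrt (Mᴴ * M))

/-- The α-z Rényi block coherence measure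
`C_{α,z}(ρ,P) = 1 - (max_{σ∈I_B} Tr[(σ^{(1-α)/(2z)} ρ^{α/z} σ^{(1-α)/(2z)})^z])^{1/α}`. -/
noncomputable def Caz {K : Type*} [Fintype K] (α z : ℝ) (P : K → Matrix n n ℂ)
    (ρ : Matrix n n ℂ) : ℝ :=
  1 - (sSup {x : ℝ | ∃ σ, IsBlockIncoherent P σ ∧
    x = retr (mpow (mpow σ ((1 - α) / (2 * z)) * mpow ρ (α / z) *
      mpow σ ((1 - α) / (2 * z))) z)}) ^ (1 / α)


/-- Robustness of block coherence, dual (SDP) formulation: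
`C_rob(ρ,P) = sup { Tr(Xρ) - 1 : X ⪰ 0, Δ(X) = I }`. -/
noncomputable def CrobDual {K : Type*} [Fintype K] (P : K → Matrix n n ℂ)
    (ρ : Matrix n n ℂ) : ℝ :=
  sSup {x : ℝ | ∃ X : Matrix n n ℂ, X.PosSemidef ∧ deph P X = 1 ∧
    x = retr (X * ρ) - 1}

lemma retr_nonneg_of_posSemidef {A : Matrix n n ℂ} (hA : A.PosSemidef) : 0 ≤ retr A := by
  unfold retr
  rw [Matrix.trace, Complex.re_sum]
  apply Finset.sum_nonneg
  intro i _
  have := hA.re_dotProduct_nonneg (Pi.single i 1)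
  simpa [dotProduct, Matrix.mulVec, Pi.single_apply, Finset.sum_ite_eq,
    Matrix.diag] using this

open scoped MatrixOrder in
lemma retr_mul_nonneg {A B : Matrix n n ℂ} (hA : A.PosSemidef) (hB : B.PosSemidef) :
    0 ≤ retr (A * B) := by
  have hs : (CFC.sqrt B).PosSemidef := nonneg_iff_posSemidef.mp (CFC.sqrt_nonneg B)
  have h1 : A * B = A * (CFC.sqrt B * CFC.sqrt B) := by
    rw [CFC.sqrt_mul_sqrt_self B (nonneg_iff_posSemidef.mpr hB)]
  have h2 : Matrix.trace (A * B) = Matrix.trace ((CFC.sqrt B)ᴴ * A * CFC.sqrt B) := by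
    rw [h1, hs.isHermitian.eq, ← Matrix.mul_assoc, Matrix.trace_mul_cycle]
  unfold retr
  rw [h2]
  exact retr_nonneg_of_posSemidef (hA.conjTranspose_mul_mul_same _)

lemma one_sub_posSemidef {A : Matrix n n ℂ} (hA : A.PosSemidef)
    (ht : Matrix.trace A = 1) : (1 - A).PosSemidef := by
  have hH := hA.isHermitian
  set U : Matrix n n ℂ := (hH.eigenvectorUnitary : Matrix n n ℂ) with hU
  have hUU : U * star U = 1 := (Matrix.mem_unitaryGroup_iff).mp hH.eigenvectorUnitary.2
  have hUU' : star U * U = 1 := (Matrix.mem_unitaryGroup_iff').mp hH.eigenvectorUnitary.2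
  have htr : Matrix.trace A = ∑ i, (hH.eigenvalues i : ℂ) := by
    conv_lhs => rw [hH.spectral_theorem, Unitary.conjStarAlgAut_apply, ← hU]
    rw [Matrix.trace_mul_cycle, hUU', Matrix.one_mul, Matrix.trace_diagonal]
    rfl
  have hsum : ∑ i, hH.eigenvalues i = 1 := by
    have := ht ▸ htr
    have := congrArg Complex.re this.symm
    simpa [Complex.re_sum] using this
  have hle : ∀ i, hH.eigenvalues i ≤ 1 := by
    intro i
    rw [← hsum]
    exact Finset.single_le_sum (fun j _ => hA.eigenvalues_nonneg j) (Finset.mem_univ i)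
  have hdecomp : 1 - A =
      U * Matrix.diagonal (fun i => (1 - hH.eigenvalues i : ℝ) : n → ℂ) * star U := by
    have h1 : (1 : Matrix n n ℂ) = U * 1 * star U := by rw [Matrix.mul_one, hUU]
    conv_lhs => rw [h1, hH.spectral_theorem, Unitary.conjStarAlgAut_apply, ← hU]
    rw [← Matrix.sub_mul, ← Matrix.mul_sub]
    congr 1
    congr 1
    rw [← Matrix.diagonal_one, Matrix.diagonal_sub]
    congr 1
    funext i
    simp [Function.comp, Complex.ofReal_sub]
  rw [hdecomp]
  have hdiag : (Matrix.diagonal (fun i => (1 - hH.eigenvalues i : ℝ) : n → ℂ)).PosSemidef := by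
    apply Matrix.PosSemidef.diagonal
    rw [Pi.le_def]
    intro i
    simp only [Pi.zero_apply, Complex.zero_le_real]
    linarith [hle i]
  simpa [Matrix.star_eq_conjTranspose] using hdiag.mul_mul_conjTranspose_same U


section Aux

variable {K : Type*} [Fintype K]

lemma deph_posSemidef (P : K → Matrix n n ℂ) (hP : IsProjFamily P)
    {ρ : Matrix n n ℂ} (hρ : ρ.PosSemidef) : (deph P ρ).PosSemidef := by
  unfold deph
  refine Finset.sum_induction _ _ (fun a b ha hb => ha.add hb) .zero ?_
  intro k _
  have h : P k * ρ * P k = (P k)ᴴ * ρ * P k := by rw [(hP.1 k).eq]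
  rw [h]
  exact hρ.conjTranspose_mul_mul_same _

lemma trace_deph (P : K → Matrix n n ℂ) (hP : IsProjFamily P)
    (X : Matrix n n ℂ) : Matrix.trace (deph P X) = Matrix.trace X := by
  unfold deph
  rw [Matrix.trace_sum]
  have h : ∀ k, Matrix.trace (P k * X * P k) = Matrix.trace (P k * X) := by
    intro k
    rw [Matrix.trace_mul_cycle, hP.2.1 k]
  simp_rw [h, ← Matrix.trace_sum, ← Finset.sum_mul, hP.2.2.2, Matrix.one_mul]

lemma deph_idem (P : K → Matrix n n ℂ) (hP : IsProjFamily P)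
    (X : Matrix n n ℂ) : deph P (deph P X) = deph P X := by
  unfold deph
  refine Finset.sum_congr rfl fun k _ => ?_
  rw [Finset.mul_sum, Finset.sum_mul]
  rw [Finset.sum_eq_single k]
  · rw [← Matrix.mul_assoc, ← Matrix.mul_assoc, hP.2.1 k, Matrix.mul_assoc,
      Matrix.mul_assoc, hP.2.1 k, ← Matrix.mul_assoc]
  · intro j _ hjk
    have h1 : P k * (P j * X * P j) * P k = P k * P j * (X * (P j * P k)) := by
      simp only [Matrix.mul_assoc]
    rw [h1, hP.2.2.1 k j (Ne.symm hjk), Matrix.zero_mul]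
  · intro h
    exact absurd (Finset.mem_univ k) h

lemma deph_one (P : K → Matrix n n ℂ) (hP : IsProjFamily P) :
    deph P (1 : Matrix n n ℂ) = 1 := by
  unfold deph
  simp_rw [Matrix.mul_one, hP.2.1]
  exact hP.2.2.2

lemma deph_linear_comb (P : K → Matrix n n ℂ) (A B C : Matrix n n ℂ) :
    deph P (A - B + C) = deph P A - deph P B + deph P C := by
  unfold deph
  rw [← Finset.sum_sub_distrib, ← Finset.sum_add_distrib]
  refine Finset.sum_congr rfl fun k _ => ?_
  rw [Matrix.mul_add, Matrix.mul_sub, Matrix.add_mul, Matrix.sub_mul]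

end Aux


/-- `X₁ = I - Δ(ρ) + ρ` is a feasible point of the dual SDP, and
hence `C_rob(ρ,P) ≥ -Tr(ρ W_ρ) = Tr(ρ²) - Tr(ρ Δ(ρ))`. -/
theorem CrobDual_lower_bound
    {K : Type*} [Fintype K]
    (P : K → Matrix n n ℂ) (hP : IsProjFamily P)
    (ρ : Matrix n n ℂ) (hρ : IsDensityMatrix ρ) :
    (1 - deph P ρ + ρ).PosSemidef ∧ deph P (1 - deph P ρ + ρ) = 1 ∧
      retr (ρ * ρ) - retr (ρ * deph P ρ) ≤ CrobDual P ρ := by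
  obtain ⟨hρpsd, hρtr⟩ := hρ
  have hDpsd : (deph P ρ).PosSemidef := deph_posSemidef P hP hρpsd
  have hDtr : Matrix.trace (deph P ρ) = 1 := by rw [trace_deph P hP, hρtr]
  have h1 : (1 - deph P ρ + ρ).PosSemidef :=
    (one_sub_posSemidef hDpsd hDtr).add hρpsd
  have h2 : deph P (1 - deph P ρ + ρ) = 1 := by
    rw [deph_linear_comb, deph_one P hP, deph_idem P hP, sub_add_cancel]
  refine ⟨h1, h2, ?_⟩
  unfold CrobDual
  have hmem : retr (ρ * ρ) - retr (ρ * deph P ρ) ∈ {x : ℝ | ∃ X : Matrix n n ℂ,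
      X.PosSemidef ∧ deph P X = 1 ∧ x = retr (X * ρ) - 1} := by
    refine ⟨1 - deph P ρ + ρ, h1, h2, ?_⟩
    have hexp : (1 - deph P ρ + ρ) * ρ = ρ - deph P ρ * ρ + ρ * ρ := by
      rw [Matrix.add_mul, Matrix.sub_mul, Matrix.one_mul]
    have hx : retr ((1 - deph P ρ + ρ) * ρ) = 1 - retr (ρ * deph P ρ) + retr (ρ * ρ) := by
      unfold retr
      rw [hexp, Matrix.trace_add, Matrix.trace_sub, Matrix.trace_mul_comm (deph P ρ) ρ, hρtr]
      simp [Complex.add_re, Complex.sub_re]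
    rw [hx]; ring
  have hbdd : BddAbove {x : ℝ | ∃ X : Matrix n n ℂ,
      X.PosSemidef ∧ deph P X = 1 ∧ x = retr (X * ρ) - 1} := by
    refine ⟨(Fintype.card n : ℝ) - 1, ?_⟩
    rintro x ⟨X, hX, hdX, rfl⟩
    have htrX : Matrix.trace X = (Fintype.card n : ℂ) := by
      rw [← trace_deph P hP X, hdX, Matrix.trace_one]
    have hXr : retr X = (Fintype.card n : ℝ) := by
      unfold retr; rw [htrX]; simp
    have hpos : 0 ≤ retr (X * (1 - ρ)) :=
      retr_mul_nonneg hX (one_sub_posSemidef hρpsd hρtr)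
    have hsplit : retr (X * (1 - ρ)) = retr X - retr (X * ρ) := by
      unfold retr
      rw [Matrix.mul_sub, Matrix.mul_one, Matrix.trace_sub, Complex.sub_re]
    rw [hsplit, hXr] at hpos
    simp only [Set.mem_setOf_eq] at *
    linarith
  exact le_csSup hbdd hmem


end BlockCoherence
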